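/- Fix real k_s, k_m, k_ℓ with k_m ≥ 0 and set 𝛂 = k_s + k_ℓ − 1/2, 𝛃 = k_ℓ − 1/2. For every integer 1 ≤ i ≤ r, the set D_k(Θ_i) is finite, and it is nonempty if and only if 𝛂 − |𝛃| + 2(i−1)k_m + 1 < 0. -/
import Mathlib


noncomputable section

/-- The set `D_k(Θ_i)` of discrete spectral parameters, for the root system of
type `BC` with multiplicities encoded through `α`, `β` and `km`. -/
def DkSet (α β km : ℝ) (i : ℕ) : Set (Fin i → ℝ) :=
  {ξ | (∀ h : 0 < i, ∃ n : ℕ, ξ ⟨0, h⟩ + |β| - α - 1 = 2 * (n : ℝ)) ∧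
       (∀ h : 0 < i, ξ ⟨i - 1, by omega⟩ < 0) ∧
       (∀ j : ℕ, ∀ h : j + 1 < i,
         ∃ n : ℕ, ξ ⟨j + 1, h⟩ - ξ ⟨j, by omega⟩ - 2 * km = 2 * (n : ℝ))}

lemma finite_aux (c : ℝ) : {x : ℝ | ∃ m : ℕ, x = c + 2 * m ∧ x < 0}.Finite := by
  have h : {x : ℝ | ∃ m : ℕ, x = c + 2 * m ∧ x < 0} ⊆
      (fun m : ℕ => c + 2 * m) '' (Set.Iio (⌈(-c) / 2⌉₊ + 1)) := by
    rintro x ⟨m, rfl, hx⟩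
    refine ⟨m, ?_, rfl⟩
    simp only [Set.mem_Iio]
    by_contra hcon
    push_neg at hcon
    have h1 : ((⌈(-c) / 2⌉₊ + 1 : ℕ) : ℝ) ≤ (m : ℝ) := by exact_mod_cast hcon
    have h2 : (-c) / 2 ≤ (⌈(-c) / 2⌉₊ : ℝ) := Nat.le_ceil _
    push_cast at h1
    nlinarith
  exact ((Set.finite_Iio _).image _).subset h

theorem stmt8 (ks km kl α β : ℝ) (hα : α = ks + kl - 1 / 2) (hβ : β = kl - 1 / 2)
    (hkm : 0 ≤ km) (r i : ℕ) (hi : 1 ≤ i) (hir : i ≤ r) :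
    (DkSet α β km i).Finite ∧
    ((DkSet α β km i).Nonempty ↔ α - |β| + 2 * ((i : ℝ) - 1) * km + 1 < 0) := by
  set c : ℝ := α - |β| + 1 with hc
  -- structural lemma: each coordinate has the explicit form
  have key : ∀ ξ ∈ DkSet α β km i, ∀ j, ∀ hj : j < i,
      ∃ m : ℕ, ξ ⟨j, hj⟩ = c + 2 * (j : ℝ) * km + 2 * m := by
    intro ξ hξ
    obtain ⟨h1, h3⟩ := hξ
    obtain ⟨h2, h3⟩ := h3
    intro j
    induction j with
    | zero =>
      intro hj
      obtain ⟨n, hn⟩ := h1 hj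
      exact ⟨n, by push_cast; linarith⟩
    | succ j ih =>
      intro hj
      obtain ⟨m, hm⟩ := ih (by omega)
      obtain ⟨n, hn⟩ := h3 j hj
      refine ⟨m + n, ?_⟩
      push_cast
      push_cast at hm
      linarith
  -- negativity of all coordinates
  have neg : ∀ ξ ∈ DkSet α β km i, ∀ j, ∀ hj : j < i, ξ ⟨j, hj⟩ < 0 := by
    intro ξ hξ
    obtain ⟨h1, h2, h3⟩ := hξ
    have aux : ∀ d j, j + d = i - 1 → ∀ hj : j < i, ξ ⟨j, hj⟩ < 0 := by
      intro d
      induction d with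
      | zero =>
        intro j hj hji
        have hj' : j = i - 1 := by omega
        subst hj'
        exact h2 (by omega)
      | succ d ih =>
        intro j hj hji
        have hj1 : j + 1 < i := by omega
        obtain ⟨n, hn⟩ := h3 j hj1
        have hlt : ξ ⟨j + 1, hj1⟩ < 0 := ih (j + 1) (by omega) hj1
        have hn0 : (0 : ℝ) ≤ 2 * (n : ℝ) := by positivity
        linarith
    intro j hj
    exact aux (i - 1 - j) j (by omega) hj
  constructor
  · -- finiteness
    have hsub : DkSet α β km i ⊆ Set.pi Set.univ
        (fun j : Fin i => {x : ℝ | ∃ m : ℕ, x = (c + 2 * ((j : ℕ) : ℝ) * km) + 2 * m ∧ x < 0}) := by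
      intro ξ hξ j _
      obtain ⟨m, hm⟩ := key ξ hξ j j.isLt
      exact ⟨m, hm, neg ξ hξ j j.isLt⟩
    exact (Set.Finite.pi (fun j => finite_aux _)).subset hsub
  · constructor
    · rintro ⟨ξ, hξ⟩
      obtain ⟨m, hm⟩ := key ξ hξ (i - 1) (by omega)
      have hneg : ξ ⟨i - 1, by omega⟩ < 0 := neg ξ hξ (i - 1) (by omega)
      have hcast : (((i - 1 : ℕ)) : ℝ) = (i : ℝ) - 1 := by
        push_cast [Nat.cast_sub hi]; ring
      rw [hm, hcast] at hneg
      have hm0 : (0 : ℝ) ≤ 2 * (m : ℝ) := by positivity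
      rw [hc] at hneg
      linarith
    · intro hlt
      refine ⟨fun j => c + 2 * ((j : ℕ) : ℝ) * km, ?_, ?_, ?_⟩
      · intro h
        refine ⟨0, ?_⟩
        simp [hc]
        ring
      · intro h
        have hcast : (((i - 1 : ℕ)) : ℝ) = (i : ℝ) - 1 := by
          push_cast [Nat.cast_sub hi]; ring
        simp only [hcast, hc]
        linarith
      · intro j hj
        refine ⟨0, ?_⟩
        push_cast
        ring
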